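/- Let α ≠ 0 be a constant, A : ℝ → ℝ continuous and nowhere zero, and let t, t₁, t₂ : ℝ → ℝ be differentiable with t_{k+1}'(x) = t_k'(x) + A(t_k(x) − t_{k+1}(x)) e^{α t_k(x)} for k = 0, 1. Let G be an antiderivative of u ↦ e^{−α u}/A(u) and H an antiderivative of u ↦ 1/A(u). Then F(x) = G(t(x) − t₁(x)) − H(t₁(x) − t₂(x)) satisfies F'(x) = 0. -/

import Mathlib

open Real

theorem stmt_3 (α : ℝ) (hα : α ≠ 0) (A : ℝ → ℝ) (hA : Continuous A) (hA0 : ∀ u, A u ≠ 0)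
    (t t₁ t₂ : ℝ → ℝ)
    (ht : Differentiable ℝ t) (ht₁ : Differentiable ℝ t₁) (ht₂ : Differentiable ℝ t₂)
    (h₁ : ∀ x, deriv t₁ x = deriv t x + A (t x - t₁ x) * exp (α * t x))
    (h₂ : ∀ x, deriv t₂ x = deriv t₁ x + A (t₁ x - t₂ x) * exp (α * t₁ x))
    (G H : ℝ → ℝ)
    (hG : ∀ u, HasDerivAt G (exp (-α * u) / A u) u)
    (hH : ∀ u, HasDerivAt H (1 / A u) u) :
    ∀ x, deriv (fun y => G (t y - t₁ y) - H (t₁ y - t₂ y)) x = 0 := by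
  intro x
  have hdt : HasDerivAt t (deriv t x) x := (ht x).hasDerivAt
  have hdt1 : HasDerivAt t₁ (deriv t₁ x) x := (ht₁ x).hasDerivAt
  have hdt2 : HasDerivAt t₂ (deriv t₂ x) x := (ht₂ x).hasDerivAt
  have hτ : HasDerivAt (fun y => t y - t₁ y) (deriv t x - deriv t₁ x) x := hdt.sub hdt1
  have hτ₁ : HasDerivAt (fun y => t₁ y - t₂ y) (deriv t₁ x - deriv t₂ x) x := hdt1.sub hdt2
  have hGc : HasDerivAt (fun y => G (t y - t₁ y))
      (exp (-α * (t x - t₁ x)) / A (t x - t₁ x) * (deriv t x - deriv t₁ x)) x :=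
    (hG (t x - t₁ x)).comp x hτ
  have hHc : HasDerivAt (fun y => H (t₁ y - t₂ y))
      (1 / A (t₁ x - t₂ x) * (deriv t₁ x - deriv t₂ x)) x :=
    (hH (t₁ x - t₂ x)).comp x hτ₁
  have hF : HasDerivAt (fun y => G (t y - t₁ y) - H (t₁ y - t₂ y)) _ x := hGc.sub hHc
  rw [hF.deriv]
  have e1 : deriv t x - deriv t₁ x = -(A (t x - t₁ x) * exp (α * t x)) := by
    rw [h₁ x]; ring
  have e2 : deriv t₁ x - deriv t₂ x = -(A (t₁ x - t₂ x) * exp (α * t₁ x)) := by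
    rw [h₂ x]; ring
  rw [e1, e2]
  have hexp : exp (-α * (t x - t₁ x)) * exp (α * t x) = exp (α * t₁ x) := by
    rw [← Real.exp_add]; ring_nf
  rw [neg_mul] at hexp ⊢
  have hAτ := hA0 (t x - t₁ x)
  have hAτ₁ := hA0 (t₁ x - t₂ x)
  field_simp
  linear_combination (-1 : ℝ) * hexp
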